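/- Under the symmetry hypothesis, the symbol maps are equivariant: letting S be the n×n matrix with S k k' = a k if k' = σ⁻¹ k and S k k' = 0 otherwise, and (R f) (k,l) = f (σ⁻¹ k, τ⁻¹ l), one has C_u (R f) = S * (C_u f) * Sᴴ and D_u (R f) = S * (D_u f) * Sᴴ for every f : Fin n × Fin n → ℂ. -/

import Mathlib

open Finset Matrix

/-- The symbol-to-operator map `C_u`. -/
noncomputable def Cmap {ι : Type*} [Fintype ι] (u : Matrix ι ι ℂ) (f : ι × ι → ℂ) :
    Matrix ι ι ℂ :=
  fun k k' => ∑ l, u k l * f (k, l) * (starRingEnd ℂ) (u k' l)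

/-- The symbol-to-operator map `D_u`. -/
noncomputable def Dmap {ι : Type*} [Fintype ι] (u : Matrix ι ι ℂ) (f : ι × ι → ℂ) :
    Matrix ι ι ℂ :=
  fun k k' => ∑ l, u k l * f (k', l) * (starRingEnd ℂ) (u k' l)

/-- The representation operator `R` associated to a pair of permutations. -/
def Rop {ι : Type*} (σ τ : Equiv.Perm ι) (f : ι × ι → ℂ) : ι × ι → ℂ :=
  fun p => f (σ⁻¹ p.1, τ⁻¹ p.2)

/-- the symbol maps `C_u` and `D_u` intertwine the representations `R` and
`Q = S · S*`, where `S` is the unitary operator `(S φ) k = a k · φ (σ⁻¹ k)`. -/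
theorem stmt9 (n : ℕ) (hn : 1 ≤ n) (u : Matrix (Fin n) (Fin n) ℂ)
    (hu : u * uᴴ = 1) (hne : ∀ k l, u k l ≠ 0)
    (σ τ : Equiv.Perm (Fin n)) (a b : Fin n → ℂ)
    (ha : ∀ k, ‖a k‖ = 1) (hb : ∀ l, ‖b l‖ = 1)
    (hsym : ∀ k l, a k * u (σ⁻¹ k) (τ⁻¹ l) * (starRingEnd ℂ) (b l) = u k l)
    (S : Matrix (Fin n) (Fin n) ℂ)
    (hS : ∀ k k', S k k' = if k' = σ⁻¹ k then a k else 0) :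
    ∀ f : Fin n × Fin n → ℂ,
      Cmap u (Rop σ τ f) = S * Cmap u f * Sᴴ ∧
      Dmap u (Rop σ τ f) = S * Dmap u f * Sᴴ := by
  have hbconj : ∀ l, (starRingEnd ℂ) (b l) * b l = 1 := by
    intro l
    have h := Complex.mul_conj (b l)
    rw [mul_comm] at h
    rw [h, Complex.normSq_eq_norm_sq, hb]
    norm_num
  have hQ : ∀ M : Matrix (Fin n) (Fin n) ℂ, ∀ k k',
      (S * M * Sᴴ) k k' = a k * M (σ⁻¹ k) (σ⁻¹ k') * (starRingEnd ℂ) (a k') := by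
    intro M k k'
    simp only [Matrix.mul_apply, Matrix.conjTranspose_apply, hS, ite_mul, zero_mul,
      mul_ite, mul_zero, apply_ite (starRingEnd ℂ), map_zero, Finset.sum_ite_eq,
      Finset.mem_univ, if_true]
    simp [Finset.sum_ite_eq', apply_ite (starRingEnd ℂ)]
  have key : ∀ (k k' : Fin n) (g : Fin n → ℂ),
      ∑ l, u k l * g (τ⁻¹ l) * (starRingEnd ℂ) (u k' l) =
      a k * (∑ m, u (σ⁻¹ k) m * g m * (starRingEnd ℂ) (u (σ⁻¹ k') m)) *
        (starRingEnd ℂ) (a k') := by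
    intro k k' g
    have step : ∀ l, u k l * g (τ⁻¹ l) * (starRingEnd ℂ) (u k' l) =
        a k * (u (σ⁻¹ k) (τ⁻¹ l) * g (τ⁻¹ l) * (starRingEnd ℂ) (u (σ⁻¹ k') (τ⁻¹ l))) *
          (starRingEnd ℂ) (a k') := by
      intro l
      rw [← hsym k l, ← hsym k' l]
      simp only [_root_.map_mul, Complex.conj_conj]
      have h := hbconj l
      ring_nf
      linear_combination (a k * u (σ⁻¹ k) (τ⁻¹ l) * g (τ⁻¹ l) *
        (starRingEnd ℂ) (a k') * (starRingEnd ℂ) (u (σ⁻¹ k') (τ⁻¹ l))) * h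
    calc ∑ l, u k l * g (τ⁻¹ l) * (starRingEnd ℂ) (u k' l)
        = ∑ l, a k * (u (σ⁻¹ k) (τ⁻¹ l) * g (τ⁻¹ l) *
            (starRingEnd ℂ) (u (σ⁻¹ k') (τ⁻¹ l))) * (starRingEnd ℂ) (a k') := by
          exact Finset.sum_congr rfl fun l _ => step l
      _ = ∑ m, a k * (u (σ⁻¹ k) m * g m * (starRingEnd ℂ) (u (σ⁻¹ k') m)) *
            (starRingEnd ℂ) (a k') :=
          Equiv.sum_comp (τ⁻¹ : Equiv.Perm (Fin n))
            (fun m => a k * (u (σ⁻¹ k) m * g m * (starRingEnd ℂ) (u (σ⁻¹ k') m)) *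
              (starRingEnd ℂ) (a k'))
      _ = a k * (∑ m, u (σ⁻¹ k) m * g m * (starRingEnd ℂ) (u (σ⁻¹ k') m)) *
            (starRingEnd ℂ) (a k') := by
          simp only [Finset.mul_sum, Finset.sum_mul]
  intro f
  constructor
  · ext k k'
    rw [hQ]
    simpa [Cmap, Rop] using key k k' (fun m => f (σ⁻¹ k, m))
  · ext k k'
    rw [hQ]
    simpa [Dmap, Rop] using key k k' (fun m => f (σ⁻¹ k', m))
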